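/- Let A be a Leibniz algebra over a field, i.e. a vector space with a bilinear product ∘ satisfying (X∘Y)∘Z = X∘(Y∘Z) − Y∘(X∘Z). Let N : A → A be a linear map and define the contracted product X∘_N Y = N(X)∘Y + X∘N(Y) − N(X∘Y) and the Nijenhuis torsion Tor_N(X,Y) = N(X)∘N(Y) − N(X∘_N Y). If Tor_N vanishes identically, then ∘_N satisfies the Leibniz Jacobi identity (X∘_N Y)∘_N Z = X∘_N(Y∘_N Z) − Y∘_N(X∘_N Z). -/
import Mathlib

theorem leibniz_contracted_of_torsion_zero
    {K A : Type*} [Field K] [AddCommGroup A] [Module K A]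
    (m : A →ₗ[K] A →ₗ[K] A) (N : A →ₗ[K] A)
    (jacobi : ∀ X Y Z : A, m (m X Y) Z = m X (m Y Z) - m Y (m X Z))
    (cN : A → A → A)
    (hcN : ∀ X Y : A, cN X Y = m (N X) Y + m X (N Y) - N (m X Y))
    (torsion_zero : ∀ X Y : A, m (N X) (N Y) - N (cN X Y) = 0) :
    ∀ X Y Z : A, cN (cN X Y) Z = cN X (cN Y Z) - cN Y (cN X Z) := by
  have key : ∀ X Y : A, m (N X) (N Y)
      = N (m (N X) Y) + N (m X (N Y)) - N (N (m X Y)) := by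
    intro X Y
    have h := sub_eq_zero.mp (torsion_zero X Y)
    rw [h, hcN, map_sub, map_add]
  intro X Y Z
  have h3 : (m (N (m (N X) Y)) Z + m (N (m X (N Y))) Z - m (N (N (m X Y))) Z)
      - (m (N X) (m (N Y) Z) - m (N Y) (m (N X) Z))
      = 0 := by
    rw [← jacobi, key]
    simp only [map_add, map_sub, LinearMap.add_apply, LinearMap.sub_apply]
    abel
  rw [← sub_eq_zero]
  simp only [hcN, map_add, map_sub, LinearMap.add_apply, LinearMap.sub_apply,
    jacobi, key]
  rw [← h3]
  abel
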